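/- Let M ≥ 1 be an integer, let k = (k_0, …, k_M) be a vector of nonnegative integers with k_0 = 0, set k̃ = (k_1, …, k_M, 0), and let m be an integer vector with 0 ≤ m ≤ min{k, k̃} entrywise. Then there exists a transmission scattering sequence p ∈ S′_M such that κ′(p) = k and β′(p) = m. -/

import Mathlib

/-- Entry `i` of an integer sequence given as a list (default `0` out of range). -/
def ent (p : List ℤ) (i : ℕ) : ℤ := p.getD i 0

/-- Excursions of `p` to depth `n`: maximal blocks `[a, c]` of consecutive
indices on which `p` is at least `n`. -/
def excSet (p : List ℤ) (n : ℤ) : Set (ℕ × ℕ) :=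
  {ac | ac.1 ≤ ac.2 ∧ ac.2 ≤ p.length - 1 ∧
    (∀ i, ac.1 ≤ i → i ≤ ac.2 → n ≤ ent p i) ∧
    (ac.1 = 0 ∨ ent p (ac.1 - 1) < n) ∧
    (ac.2 = p.length - 1 ∨ ent p (ac.2 + 1) < n)}

/-- The left shift `(k_1, ..., k_M, 0)` of a vector `(k_0, ..., k_M)`. -/
def ktilde (M : ℕ) (k : Fin (M + 1) → ℕ) : Fin (M + 1) → ℕ :=
  fun n => if h : (n : ℕ) + 1 < M + 1 then k ⟨(n : ℕ) + 1, h⟩ else 0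

/-- A transmission scattering sequence for an `M`-layer medium: a sequence
`(p_0, ..., p_L)` with `p_0 = -1`, `p_L = M + 1`, `p_i ∈ {0, ..., M}` for
`1 ≤ i ≤ L - 1`, and `|p_{i+1} - p_i| = 1` for all `0 ≤ i ≤ L - 1`. -/
def IsTransScat (M : ℕ) (p : List ℤ) : Prop :=
  ent p 0 = -1 ∧ ent p (p.length - 1) = (M : ℤ) + 1 ∧
  (∀ i, 1 ≤ i → i ≤ p.length - 2 → 0 ≤ ent p i ∧ ent p i ≤ (M : ℤ)) ∧
  (∀ i, i < p.length - 1 → |ent p (i + 1) - ent p i| = 1)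

/-- The transmission transit count vector `κ'(p)`: `k_n` is the number of
excursions of `p` to depth `n` other than the trunk block (the excursion
containing the final index `L`). -/
noncomputable def kappaT (M : ℕ) (p : List ℤ) : Fin (M + 1) → ℕ :=
  fun n => {ac ∈ excSet p ((n : ℕ) : ℤ) | ac.2 ≠ p.length - 1}.ncard

/-- The transmission branch count vector `β'(p)`: `m_n` is the number of
excursions of `p` to depth `n`, other than the trunk block, that contain some
index `i` with `p_i ≥ n + 1`. -/
noncomputable def betaT (M : ℕ) (p : List ℤ) : Fin (M + 1) → ℕ :=
  fun n => {ac ∈ excSet p ((n : ℕ) : ℤ) | ac.2 ≠ p.length - 1 ∧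
    ∃ i, ac.1 ≤ i ∧ i ≤ ac.2 ∧ ((n : ℕ) : ℤ) + 1 ≤ ent p i}.ncard


def cnt2 (x y : ℤ) : List ℤ → ℕ
  | a :: b :: l => (if a = x ∧ b = y then 1 else 0) + cnt2 x y (b :: l)
  | _ => 0

def cnt3 (x y z : ℤ) : List ℤ → ℕ
  | a :: b :: c :: l => (if a = x ∧ b = y ∧ c = z then 1 else 0) + cnt3 x y z (b :: c :: l)
  | _ => 0

lemma ent_cons_succ (a : ℤ) (l : List ℤ) (i : ℕ) : ent (a :: l) (i+1) = ent l i := rfl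

lemma cnt2_eq_sum (x y : ℤ) : ∀ p : List ℤ,
    cnt2 x y p = ∑ i ∈ Finset.range (p.length - 1),
      if ent p i = x ∧ ent p (i+1) = y then 1 else 0
  | [] => by simp [cnt2]
  | [a] => by simp [cnt2]
  | a :: b :: l => by
    rw [cnt2, cnt2_eq_sum x y (b :: l)]
    have h1 : (a :: b :: l).length - 1 = l.length + 1 := by simp
    rw [h1, Finset.sum_range_succ']
    have h2 : (b :: l).length - 1 = l.length := by simp
    rw [h2]
    simp only [ent_cons_succ, show ent (b :: l) 0 = b from rfl,
      show ent (a :: b :: l) 0 = a from rfl]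
    exact Nat.add_comm _ _

lemma cnt3_eq_sum (x y z : ℤ) : ∀ p : List ℤ,
    cnt3 x y z p = ∑ i ∈ Finset.range (p.length - 2),
      if ent p i = x ∧ ent p (i+1) = y ∧ ent p (i+2) = z then 1 else 0
  | [] => by simp [cnt3]
  | [a] => by simp [cnt3]
  | [a, b] => by simp [cnt3]
  | a :: b :: c :: l => by
    rw [cnt3, cnt3_eq_sum x y z (b :: c :: l)]
    have h1 : (a :: b :: c :: l).length - 2 = l.length + 1 := by simp
    rw [h1, Finset.sum_range_succ']
    have h2 : (b :: c :: l).length - 2 = l.length := by simp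
    rw [h2]
    simp only [ent_cons_succ, show ent (b :: c :: l) 0 = b from rfl,
      show ent (a :: b :: c :: l) 0 = a from rfl, show ent (c :: l) 0 = c from rfl]
    exact Nat.add_comm _ _


theorem counts_eq (M : ℕ) (p : List ℤ) (hp : IsTransScat M p) (v : ℕ) (hv : v ≤ M) :
    ({ac ∈ excSet p (v:ℤ) | ac.2 ≠ p.length - 1}.ncard + 1 =
      ((Finset.range (p.length - 1)).filter
        (fun i => ent p i = (v:ℤ) - 1 ∧ ent p (i+1) = (v:ℤ))).card)
  ∧ ({ac ∈ excSet p (v:ℤ) | ac.2 ≠ p.length - 1 ∧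
        ∃ i, ac.1 ≤ i ∧ i ≤ ac.2 ∧ (v:ℤ) + 1 ≤ ent p i}.ncard + 1 =
      ((Finset.range (p.length - 2)).filter
        (fun i => ent p i = (v:ℤ) - 1 ∧ ent p (i+1) = (v:ℤ) ∧ ent p (i+2) = (v:ℤ)+1)).card) := by
  classical
  obtain ⟨h0, hLst, hbnd, hstp⟩ := hp
  set L := p.length with hLdef
  set n : ℤ := (v : ℤ) with hndef
  have hn0 : 0 ≤ n := by positivity
  have hnM : n ≤ (M:ℤ) := by rw [hndef]; exact_mod_cast hv
  have hL2 : 2 ≤ L := by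
    by_contra h
    push_neg at h
    have hL1 : L - 1 = 0 := by omega
    rw [hL1, h0] at hLst
    omega
  have cross : ∀ i j, i ≤ j → j ≤ L - 1 → ent p i < n → n ≤ ent p j →
      ∃ c, i ≤ c ∧ c < j ∧ ent p c = n - 1 ∧ ent p (c+1) = n := by
    intro i j hij hjL hi hj
    have hPc := Nat.findGreatest_spec (P := fun c => ent p c < n) hij hi
    set c := Nat.findGreatest (fun c => ent p c < n) j with hc
    have hci : i ≤ c := Nat.le_findGreatest hij hi
    have hcj : c ≤ j := Nat.findGreatest_le j
    have hcltj : c < j := by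
      rcases Nat.lt_or_ge c j with h | h
      · exact h
      · exfalso; have : c = j := by omega
        rw [this] at hPc; omega
    have hnext : ¬ (ent p (c+1) < n) :=
      Nat.findGreatest_is_greatest (P := fun c => ent p c < n) (k := c+1) (n := j) (by omega) (by omega)
    push_neg at hnext
    have hstep := hstp c (by omega)
    rcases (abs_eq (by norm_num : (0:ℤ) ≤ 1)).mp hstep with h | h
    · exact ⟨c, hci, hcltj, by omega, by omega⟩
    · exact ⟨c, hci, hcltj, by omega, by omega⟩
  set U : Finset ℕ :=
    (Finset.range (L-1)).filter (fun i => ent p i = n - 1 ∧ ent p (i+1) = n) with hU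
  have memU : ∀ i, i ∈ U ↔ i < L - 1 ∧ ent p i = n-1 ∧ ent p (i+1) = n := by
    intro i; simp [hU]
  have hUne : U.Nonempty := by
    obtain ⟨c, _, hc2, hc3, hc4⟩ := cross 0 (L-1) (by omega) le_rfl
      (by rw [h0]; omega) (by rw [hLst]; omega)
    exact ⟨c, (memU c).mpr ⟨hc2, hc3, hc4⟩⟩
  set t := U.max' hUne with htdef
  have htU : t ∈ U := U.max'_mem hUne
  obtain ⟨htL, hte, hte1⟩ := (memU t).mp htU
  have htmax : ∀ i ∈ U, i ≤ t := fun i hi => U.le_max' i hi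
  have tail_ge : ∀ j, t < j → j ≤ L-1 → n ≤ ent p j := by
    intro j htj hjL
    by_contra h
    push_neg at h
    obtain ⟨c, hc1, hc2, hc3, hc4⟩ := cross j (L-1) hjL le_rfl h (by rw [hLst]; omega)
    have hcU : c ∈ U := (memU c).mpr ⟨by omega, hc3, hc4⟩
    have := htmax c hcU
    omega
  set U' := U.erase t with hU'
  set E : ℕ → ℕ := fun i =>
    if h : ∃ j, i+1 ≤ j ∧ j+1 ≤ L-1 ∧ ent p (j+1) < n then Nat.find h else 0 with hE
  have hEspec : ∀ i ∈ U', (i+1 ≤ E i ∧ E i + 1 ≤ L-1 ∧ ent p (E i + 1) < n) ∧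
      (∀ q, i+1 ≤ q → q ≤ E i → n ≤ ent p q) := by
    intro i hiU'
    have hiU : i ∈ U := Finset.mem_of_mem_erase hiU'
    have hine : i ≠ t := Finset.ne_of_mem_erase hiU'
    obtain ⟨hiL, hie, hie1⟩ := (memU i).mp hiU
    have hilt : i < t := lt_of_le_of_ne (htmax i hiU) hine
    have hi1t : i + 1 < t := by
      rcases Nat.lt_or_ge (i+1) t with h | h
      · exact h
      · exfalso
        have h' : i + 1 = t := by omega
        rw [h'] at hie1
        rw [hte] at hie1
        omega
    have hex : ∃ j, i+1 ≤ j ∧ j+1 ≤ L-1 ∧ ent p (j+1) < n := by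
      refine ⟨t-1, by omega, by omega, ?_⟩
      have h' : t - 1 + 1 = t := by omega
      rw [h', hte]
      omega
    have hEeq : E i = Nat.find hex := by
      simp only [hE]
      rw [dif_pos hex]
    have hsp := Nat.find_spec hex
    rw [← hEeq] at hsp
    refine ⟨hsp, ?_⟩
    intro q hq1 hq2
    rcases eq_or_lt_of_le hq1 with h | h
    · rw [← h]; rw [hie1]
    · by_contra hcon
      push_neg at hcon
      have hlt : q - 1 < Nat.find hex := by omega
      have := Nat.find_min hex hlt
      apply this
      refine ⟨by omega, by omega, ?_⟩
      have h' : q - 1 + 1 = q := by omega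
      rw [h']
      exact hcon
  -- basic membership of image points
  have hSmem : ∀ i ∈ U', ((i+1, E i) : ℕ × ℕ) ∈ excSet p n ∧ E i ≠ L - 1 := by
    intro i hiU'
    obtain ⟨⟨hE1, hE2, hE3⟩, hEmin⟩ := hEspec i hiU'
    obtain ⟨hiL, hie, hie1⟩ := (memU i).mp (Finset.mem_of_mem_erase hiU')
    refine ⟨⟨hE1, by omega, ?_, ?_, ?_⟩, by omega⟩
    · intro q hq1 hq2; exact hEmin q hq1 hq2
    · right
      have h' : i + 1 - 1 = i := by omega
      rw [h', hie]
      omega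
    · right; exact hE3
  have him2 : {ac ∈ excSet p n | ac.2 ≠ L - 1} = (fun i => (i+1, E i)) '' ↑U' := by
    ext ⟨a, c⟩
    constructor
    · rintro ⟨⟨hac, hcL, hall, hleft, hright⟩, hne⟩
      have hclt : c < L - 1 := lt_of_le_of_ne hcL hne
      have hrt : ent p (c+1) < n := hright.resolve_left hne
      have ha1 : 1 ≤ a := by
        by_contra h
        push_neg at h
        have h' : a = 0 := by omega
        have := hall 0 (by omega) (by omega)
        rw [h0] at this
        omega
      have hlt : ent p (a-1) < n := hleft.resolve_left (by omega)
      have hstep := hstp (a-1) (by omega)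
      have ha' : a - 1 + 1 = a := by omega
      rw [ha'] at hstep
      have hge : n ≤ ent p a := hall a le_rfl hac
      have habs := (abs_eq (by norm_num : (0:ℤ) ≤ 1)).mp hstep
      have hea : ent p a = n ∧ ent p (a-1) = n - 1 := by
        rcases habs with h | h
        · constructor <;> omega
        · exfalso; omega
      have hiU : (a-1) ∈ U := by
        refine (memU (a-1)).mpr ⟨by omega, hea.2, ?_⟩
        rw [ha']
        exact hea.1
      have hit : a - 1 ≠ t := by
        intro h
        have := tail_ge (c+1) (by omega) (by omega)
        omega
      have hiU' : a - 1 ∈ U' := Finset.mem_erase.mpr ⟨hit, hiU⟩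
      obtain ⟨⟨hE1, hE2, hE3⟩, hEmin⟩ := hEspec (a-1) hiU'
      rw [ha'] at hE1 hEmin
      have hcE : c = E (a-1) := by
        rcases lt_trichotomy c (E (a-1)) with h | h | h
        · have := hEmin (c+1) (by omega) (by omega); omega
        · exact h
        · have := hall (E (a-1) + 1) (by omega) (by omega); omega
      refine ⟨a-1, hiU', ?_⟩
      show (a - 1 + 1, E (a - 1)) = (a, c)
      rw [ha', ← hcE]
    · rintro ⟨i, hiU', heq⟩
      obtain ⟨hexc, hne⟩ := hSmem i hiU'
      rw [← heq] at *
      exact ⟨hexc, hne⟩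
  have hinj : Set.InjOn (fun i : ℕ => (i+1, E i)) ↑U' := by
    intro x _ y _ h
    have := congrArg Prod.fst h
    simpa using this
  have hk : {ac ∈ excSet p n | ac.2 ≠ L - 1}.ncard = U'.card := by
    rw [him2, Set.ncard_image_of_injOn hinj, Set.ncard_coe_finset]
  have hcardU' : U'.card + 1 = U.card := by
    rw [hU', Finset.card_erase_of_mem htU]
    have : 0 < U.card := Finset.card_pos.mpr hUne
    omega
  constructor
  · rw [hk]; exact hcardU'
  · set V := (Finset.range (L-2)).filter
      (fun i => ent p i = n - 1 ∧ ent p (i+1) = n ∧ ent p (i+2) = n+1) with hV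
    have him3 : {ac ∈ excSet p n | ac.2 ≠ L - 1 ∧
          ∃ ii, ac.1 ≤ ii ∧ ii ≤ ac.2 ∧ n + 1 ≤ ent p ii}
        = (fun i => (i+1, E i)) '' ↑(U'.filter (fun i => ent p (i+2) = n+1)) := by
      ext ⟨a, c⟩
      constructor
      · rintro ⟨hexc, hne, w, hw1, hw2, hw3⟩
        have hmem2 : ((a,c) : ℕ×ℕ) ∈ {ac ∈ excSet p n | ac.2 ≠ L - 1} := ⟨hexc, hne⟩
        rw [him2] at hmem2
        obtain ⟨i, hiU', heq⟩ := hmem2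
        obtain ⟨⟨hE1, hE2, hE3⟩, hEmin⟩ := hEspec i hiU'
        obtain ⟨hiL, hie, hie1⟩ := (memU i).mp (Finset.mem_of_mem_erase hiU')
        have h1 : i + 1 = a := by have := congrArg Prod.fst heq; simpa using this
        have h2 : E i = c := by have := congrArg Prod.snd heq; simpa using this
        obtain ⟨hac0, hcL, hall, hlf, hrr⟩ := hexc
        simp only at hac0 hcL hall hne hw1 hw2
        have hclt : c < L - 1 := by
          rcases Nat.lt_or_ge c (L-1) with h | h
          · exact h
          · exfalso; exact hne (by omega)
        have hac : a < c := by
          rcases Nat.lt_or_ge a c with h | h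
          · exact h
          · have hw : w = a := by omega
            rw [hw, ← h1, hie1] at hw3
            omega
        have hgE : n ≤ ent p (i+2) := hEmin (i+2) (by omega) (by omega)
        have hstep := hstp (i+1) (by omega)
        rw [show i+1+1 = i+2 by omega] at hstep
        have hpat : ent p (i+2) = n + 1 := by
          rcases (abs_eq (by norm_num : (0:ℤ) ≤ 1)).mp hstep with h | h
          · rw [hie1] at h; omega
          · rw [hie1] at h; omega
        exact ⟨i, Finset.mem_filter.mpr ⟨hiU', hpat⟩, heq⟩
      · rintro ⟨i, hif, heq⟩
        obtain ⟨hiU', hpat⟩ := Finset.mem_filter.mp hif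
        obtain ⟨hexc, hne⟩ := hSmem i hiU'
        obtain ⟨⟨hE1, hE2, hE3⟩, hEmin⟩ := hEspec i hiU'
        have hEge : i + 2 ≤ E i := by
          rcases Nat.lt_or_ge (E i) (i+2) with h | h
          · exfalso
            have he : E i = i + 1 := by omega
            rw [he, show i+1+1 = i+2 by omega, hpat] at hE3
            omega
          · exact h
        rw [← heq]
        refine ⟨hexc, hne, i+2, ?_, ?_, ?_⟩
        · show i + 1 ≤ i + 2
          omega
        · show i + 2 ≤ E i
          exact hEge
        · show n + 1 ≤ ent p (i+2)
          rw [hpat]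
    have hinj3 : Set.InjOn (fun i : ℕ => (i+1, E i))
        ↑(U'.filter (fun i => ent p (i+2) = n+1)) := by
      intro x _ y _ h
      have := congrArg Prod.fst h
      simpa using this
    have hb : {ac ∈ excSet p n | ac.2 ≠ L - 1 ∧
          ∃ ii, ac.1 ≤ ii ∧ ii ≤ ac.2 ∧ n + 1 ≤ ent p ii}.ncard
        = (U'.filter (fun i => ent p (i+2) = n+1)).card := by
      rw [him3, Set.ncard_image_of_injOn hinj3, Set.ncard_coe_finset]
    have ht1 : t + 1 < L - 1 := by
      by_contra h
      push_neg at h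
      have he : t + 1 = L - 1 := by omega
      rw [he, hLst] at hte1
      omega
    have hVt : t ∈ V := by
      have hge := tail_ge (t+2) (by omega) (by omega)
      have hstep := hstp (t+1) (by omega)
      rw [show t+1+1 = t+2 by omega] at hstep
      have hpt : ent p (t+2) = n + 1 := by
        rcases (abs_eq (by norm_num : (0:ℤ) ≤ 1)).mp hstep with h | h
        · rw [hte1] at h; omega
        · rw [hte1] at h; omega
      exact Finset.mem_filter.mpr ⟨Finset.mem_range.mpr (by omega), hte, hte1, hpt⟩
    have hUV : U'.filter (fun i => ent p (i+2) = n+1) = V.erase t := by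
      ext i
      constructor
      · intro h
        obtain ⟨hiU', hpat⟩ := Finset.mem_filter.mp h
        obtain ⟨hne, hiU⟩ := Finset.mem_erase.mp hiU'
        obtain ⟨hiL, hq1, hq2⟩ := (memU i).mp hiU
        have hile : i ≤ t := htmax i hiU
        exact Finset.mem_erase.mpr ⟨hne,
          Finset.mem_filter.mpr ⟨Finset.mem_range.mpr (by omega), hq1, hq2, hpat⟩⟩
      · intro h
        obtain ⟨hne, hiV⟩ := Finset.mem_erase.mp h
        obtain ⟨hir, hq1, hq2, hq3⟩ := Finset.mem_filter.mp hiV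
        have hirr := Finset.mem_range.mp hir
        exact Finset.mem_filter.mpr ⟨Finset.mem_erase.mpr ⟨hne,
          (memU i).mpr ⟨by omega, hq1, hq2⟩⟩, hq3⟩
    rw [hb, hUV, Finset.card_erase_of_mem hVt]
    have : 0 < V.card := Finset.card_pos.mpr ⟨t, hVt⟩
    omega


def mu (mm : ℕ → ℕ) (b r : ℕ) : ℕ := ((List.range' b (r + 1 - b)).map mm).foldr min (mm r)

lemma mu_self (mm : ℕ → ℕ) (r : ℕ) : mu mm r r = mm r := by
  unfold mu
  rw [show r + 1 - r = 1 by omega, List.range'_one]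
  simp

lemma mu_cons (mm : ℕ → ℕ) (b r : ℕ) (h : b ≤ r) :
    mu mm b r = min (mm b) (mu mm (b+1) r) := by
  unfold mu
  rw [show r + 1 - b = (r - b) + 1 by omega, List.range'_succ,
    show r - b = r + 1 - (b+1) by omega]
  simp

lemma mu_ge_iff (mm : ℕ → ℕ) (ρ b r : ℕ) (h : b ≤ r) :
    ρ ≤ mu mm b r ↔ ∀ q, b ≤ q → q ≤ r → ρ ≤ mm q := by
  obtain ⟨d, hd⟩ : ∃ d, r = b + d := ⟨r - b, by omega⟩
  subst hd
  clear h
  induction d generalizing b with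
  | zero =>
    rw [show b + 0 = b by omega, mu_self]
    constructor
    · intro h q h1 h2
      have : q = b := by omega
      subst this; exact h
    · intro h; exact h b le_rfl le_rfl
  | succ d ih =>
    rw [show b + (d+1) = (b+1) + d by omega, mu_cons mm b ((b+1)+d) (by omega), le_min_iff,
      ih (b+1)]
    constructor
    · rintro ⟨h1, h2⟩ q hq1 hq2
      rcases eq_or_lt_of_le hq1 with h | h
      · subst h; exact h1
      · exact h2 q (by omega) hq2
    · intro h
      exact ⟨h b le_rfl (by omega), fun q h1 h2 => h q (by omega) h2⟩

lemma mu_le (mm : ℕ → ℕ) (b r q : ℕ) (h1 : b ≤ q) (h2 : q ≤ r) : mu mm b r ≤ mm q :=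
  (mu_ge_iff mm _ b r (le_trans h1 h2)).mp le_rfl q h1 h2

open Classical in
noncomputable def hgt (mm : ℕ → ℕ) (b ρ : ℕ) : ℕ :=
  if h : ∃ d, mm (b+d) < ρ then Nat.find h else 0

lemma hgt_ge_iff (M : ℕ) (mm : ℕ → ℕ) (h0 : ∀ q, M ≤ q → mm q = 0)
    (b ρ e : ℕ) (hρ : 1 ≤ ρ) :
    e ≤ hgt mm b ρ ↔ ∀ d, d < e → ρ ≤ mm (b+d) := by
  have hex : ∃ d, mm (b+d) < ρ := ⟨M, by rw [h0 (b+M) (by omega)]; omega⟩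
  unfold hgt
  rw [dif_pos hex, Nat.le_find_iff]
  constructor
  · intro h d hd
    have := h d hd
    omega
  · intro h d hd
    have := h d hd
    omega

lemma hgt_le (M : ℕ) (mm : ℕ → ℕ) (h0 : ∀ q, M ≤ q → mm q = 0)
    (b ρ : ℕ) (hb : b ≤ M) (hρ : 1 ≤ ρ) : b + hgt mm b ρ ≤ M := by
  have hex : ∃ d, mm (b+d) < ρ :=
    ⟨M - b, by rw [show b + (M-b) = M by omega, h0 M le_rfl]; omega⟩
  unfold hgt
  rw [dif_pos hex]
  have h := Nat.find_min' hex (m := M - b)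
    (by rw [show b + (M-b) = M by omega, h0 M le_rfl]; omega)
  omega

def tw : ℤ → ℕ → List ℤ
  | b, 0 => [b]
  | b, h+1 => b :: (tw (b+1) h ++ [b])

lemma tw_ne_nil (b : ℤ) (h : ℕ) : tw b h ≠ [] := by
  cases h <;> simp [tw]

lemma tw_headI (b : ℤ) (h : ℕ) : (tw b h).headI = b := by
  cases h <;> simp [tw]

lemma tw_last (b : ℤ) (h : ℕ) : (tw b h).getLast? = some b := by
  cases h with
  | zero => rfl
  | succ h => rw [tw, ← List.cons_append, List.getLast?_concat]

lemma tw_mem (b : ℤ) (h : ℕ) : ∀ x ∈ tw b h, b ≤ x ∧ x ≤ b + h := by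
  induction h generalizing b with
  | zero =>
    intro x hx
    rw [tw] at hx
    simp only [List.mem_singleton] at hx
    subst hx
    omega
  | succ h ih =>
    intro x hx
    rw [tw] at hx
    simp only [List.mem_cons, List.mem_append, List.mem_singleton, List.not_mem_nil,
      or_false] at hx
    rcases hx with rfl | hx | rfl
    · omega
    · have := ih (b+1) x hx
      omega
    · omega

lemma tw_head? (b : ℤ) (h : ℕ) : (tw b h).head? = some b := by
  cases h <;> rfl

lemma tw_chain (b : ℤ) (h : ℕ) : List.Chain' (fun a c => |c - a| = 1) (tw b h) := by
  induction h generalizing b with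
  | zero => simp [tw, List.Chain']
  | succ h ih =>
    unfold List.Chain'
    rw [tw, List.isChain_cons]
    constructor
    · intro y hy
      rw [List.head?_append_of_ne_nil _ (tw_ne_nil (b+1) h), tw_head?] at hy
      simp at hy
      subst hy
      rw [show b + 1 - b = 1 by ring]
      norm_num
    · rw [List.isChain_append]
      refine ⟨ih (b+1), by simp, ?_⟩
      intro x hx y hy
      rw [tw_last (b+1) h] at hx
      simp at hx hy
      subst hx; subst hy
      rw [show b - (b+1) = -1 by ring]
      norm_num

lemma cnt2_cons (x y a : ℤ) (l : List ℤ) (h : 1 ≤ l.length) :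
    cnt2 x y (a :: l) = (if a = x ∧ l.headI = y then 1 else 0) + cnt2 x y l := by
  cases l with
  | nil => simp at h
  | cons b l2 => rfl

lemma cnt3_cons (x y z a : ℤ) (l : List ℤ) (h : 2 ≤ l.length) :
    cnt3 x y z (a :: l) =
      (if a = x ∧ l.headI = y ∧ l.tail.headI = z then 1 else 0) + cnt3 x y z l := by
  cases l with
  | nil => simp at h
  | cons b l2 =>
    cases l2 with
    | nil => simp at h
    | cons c l3 => rfl

lemma headI_append_left {l r : List ℤ} (h : l ≠ []) : (l ++ r).headI = l.headI := by
  cases l with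
  | nil => exact absurd rfl h
  | cons a t => rfl

lemma tw_cnt2 (ν : ℤ) : ∀ (h : ℕ) (b : ℤ) (r : List ℤ), r ≠ [] → r.headI = b - 1 →
    cnt2 (ν-1) ν ((b-1) :: tw b h ++ r) =
      cnt2 (ν-1) ν r + (if b ≤ ν ∧ ν ≤ b + (h:ℤ) then 1 else 0) := by
  intro h
  induction h with
  | zero =>
    intro b r hr hhead
    show cnt2 (ν-1) ν ((b-1) :: b :: r) = _
    rw [cnt2, cnt2_cons _ _ _ _ (List.length_pos_iff.mpr hr), hhead]
    push_cast
    split_ifs <;> omega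
  | succ h ih =>
    intro b r hr hhead
    have e1 : ((b-1) :: tw b (h+1) ++ r) = (b-1) :: b :: (tw (b+1) h ++ (b :: r)) := by
      rw [tw]
      simp
    rw [e1, cnt2]
    have ih' := ih (b+1) (b :: r) (by simp) (by simp)
    rw [show (b:ℤ)+1-1 = b by ring] at ih'
    have e2 : (b :: (tw (b+1) h ++ (b :: r))) = b :: tw (b+1) h ++ (b :: r) := by simp
    rw [e2, ih', cnt2_cons _ _ _ r (List.length_pos_iff.mpr hr), hhead]
    push_cast
    split_ifs <;> omega

lemma tw_cnt3 (ν : ℤ) : ∀ (h : ℕ) (b : ℤ) (r : List ℤ), 2 ≤ r.length → r.headI = b - 1 →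
    cnt3 (ν-1) ν (ν+1) ((b-1) :: tw b h ++ r) =
      cnt3 (ν-1) ν (ν+1) r + (if b ≤ ν ∧ ν + 1 ≤ b + (h:ℤ) then 1 else 0) := by
  intro h
  induction h with
  | zero =>
    intro b r hr hhead
    show cnt3 (ν-1) ν (ν+1) ((b-1) :: b :: r) = _
    rw [cnt3_cons _ _ _ _ _ (by simp; omega), cnt3_cons _ _ _ _ _ (by omega)]
    simp only [List.headI_cons, List.tail_cons, hhead]
    push_cast
    split_ifs <;> omega
  | succ h ih =>
    intro b r hr hhead
    have e1 : ((b-1) :: tw b (h+1) ++ r) = (b-1) :: b :: (tw (b+1) h ++ (b :: r)) := by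
      rw [tw]
      simp
    rw [e1]
    have hlen : 2 ≤ (tw (b+1) h ++ (b :: r)).length := by
      simp
      omega
    have hhd : (tw (b+1) h ++ (b :: r)).headI = b + 1 := by
      rw [headI_append_left (tw_ne_nil _ _), tw_headI]
    rw [cnt3_cons _ _ _ _ _ (by simp; omega)]
    simp only [List.headI_cons, List.tail_cons]
    simp only [hhd]
    have e2 : b :: (tw (b+1) h ++ (b :: r)) = b :: tw (b+1) h ++ (b :: r) := by simp
    rw [e2]
    have ih' := ih (b+1) (b :: r) (by simp; omega) (by simp)
    rw [show (b:ℤ)+1-1 = b by ring] at ih'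
    rw [ih', cnt3_cons _ _ _ _ _ (by omega), hhead]
    push_cast
    split_ifs <;> omega

lemma blocks_cnt2 (ν : ℤ) (nz : ℤ) (g : ℕ → ℕ) :
    ∀ (N : ℕ) (r : List ℤ),
    cnt2 (ν-1) ν ((List.flatten ((List.range N).map (fun j => nz :: tw (nz+1) (g j)))) ++ (nz :: r))
      = cnt2 (ν-1) ν (nz :: r) +
        ∑ j ∈ Finset.range N, (if nz+1 ≤ ν ∧ ν ≤ nz+1 + (g j : ℤ) then 1 else 0) := by
  intro N
  induction N with
  | zero =>
    intro r
    simp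
  | succ N ih =>
    intro r
    rw [List.range_succ, List.map_append, List.flatten_append]
    have e1 : (List.flatten ((List.range N).map (fun j => nz :: tw (nz+1) (g j))) ++
        List.flatten (List.map (fun j => nz :: tw (nz+1) (g j)) [N])) ++ (nz :: r)
        = List.flatten ((List.range N).map (fun j => nz :: tw (nz+1) (g j))) ++
          (nz :: (tw (nz+1) (g N) ++ (nz :: r))) := by
      simp
    rw [e1, ih (tw (nz+1) (g N) ++ (nz :: r))]
    have h2 := tw_cnt2 ν (g N) (nz+1) (nz :: r) (by simp) (by simp)
    rw [show (nz:ℤ)+1-1 = nz by ring] at h2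
    have e2 : nz :: (tw (nz+1) (g N) ++ (nz :: r)) = nz :: tw (nz+1) (g N) ++ (nz :: r) := by
      simp
    rw [e2, h2, Finset.sum_range_succ]
    omega

lemma blocks_cnt3 (ν : ℤ) (nz : ℤ) (g : ℕ → ℕ) :
    ∀ (N : ℕ) (r : List ℤ), 1 ≤ r.length →
    cnt3 (ν-1) ν (ν+1)
        ((List.flatten ((List.range N).map (fun j => nz :: tw (nz+1) (g j)))) ++ (nz :: r))
      = cnt3 (ν-1) ν (ν+1) (nz :: r) +
        ∑ j ∈ Finset.range N, (if nz+1 ≤ ν ∧ ν + 1 ≤ nz+1 + (g j : ℤ) then 1 else 0) := by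
  intro N
  induction N with
  | zero =>
    intro r hr
    simp
  | succ N ih =>
    intro r hr
    rw [List.range_succ, List.map_append, List.flatten_append]
    have e1 : (List.flatten ((List.range N).map (fun j => nz :: tw (nz+1) (g j))) ++
        List.flatten (List.map (fun j => nz :: tw (nz+1) (g j)) [N])) ++ (nz :: r)
        = List.flatten ((List.range N).map (fun j => nz :: tw (nz+1) (g j))) ++
          (nz :: (tw (nz+1) (g N) ++ (nz :: r))) := by
      simp
    rw [e1, ih (tw (nz+1) (g N) ++ (nz :: r)) (by simp; omega)]
    have h2 := tw_cnt3 ν (g N) (nz+1) (nz :: r) (by simp; omega) (by simp)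
    rw [show (nz:ℤ)+1-1 = nz by ring] at h2
    have e2 : nz :: (tw (nz+1) (g N) ++ (nz :: r)) = nz :: tw (nz+1) (g N) ++ (nz :: r) := by
      simp
    rw [e2, h2, Finset.sum_range_succ]
    omega

noncomputable def DD (M : ℕ) (kk mm : ℕ → ℕ) : ℕ → List ℤ
  | 0 => [(M : ℤ) + 1]
  | c+1 =>
    (List.flatten ((List.range (kk (M-c+1) - mm (M-c))).map
      (fun j => ((M-c : ℕ) : ℤ) :: tw (((M-c : ℕ) : ℤ)+1) (hgt mm (M-c+1) (mm (M-c) + 1 + j)))))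
    ++ (((M-c : ℕ) : ℤ) :: DD M kk mm c)

lemma DD_len (M : ℕ) (kk mm : ℕ → ℕ) (c : ℕ) : 1 ≤ (DD M kk mm c).length := by
  cases c with
  | zero => simp [DD]
  | succ c =>
    simp [DD]
    omega

lemma DD_len2 (M : ℕ) (kk mm : ℕ → ℕ) (c : ℕ) (hc : 1 ≤ c) : 2 ≤ (DD M kk mm c).length := by
  cases c with
  | zero => omega
  | succ c =>
    have := DD_len M kk mm c
    simp [DD]
    omega

lemma head?_eq_headI {l : List ℤ} (h : l ≠ []) : l.head? = some l.headI := by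
  cases l with
  | nil => exact absurd rfl h
  | cons a t => rfl

lemma DD_ne_nil (M : ℕ) (kk mm : ℕ → ℕ) (c : ℕ) : DD M kk mm c ≠ [] := by
  have := DD_len M kk mm c
  intro h
  rw [h] at this
  simp at this

lemma blocks_headI (nz : ℤ) (g : ℕ → ℕ) :
    ∀ (N : ℕ) (r : List ℤ),
    ((List.flatten ((List.range N).map (fun j => nz :: tw (nz+1) (g j)))) ++ (nz :: r)).headI
      = nz := by
  intro N
  induction N with
  | zero => intro r; simp
  | succ N ih =>
    intro r
    rw [List.range_succ, List.map_append, List.flatten_append]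
    have e1 : (List.flatten ((List.range N).map (fun j => nz :: tw (nz+1) (g j))) ++
        List.flatten (List.map (fun j => nz :: tw (nz+1) (g j)) [N])) ++ (nz :: r)
        = List.flatten ((List.range N).map (fun j => nz :: tw (nz+1) (g j))) ++
          (nz :: (tw (nz+1) (g N) ++ (nz :: r))) := by
      simp
    rw [e1, ih]

lemma DD_headI (M : ℕ) (kk mm : ℕ → ℕ) (c : ℕ) :
    (DD M kk mm c).headI = ((M + 1 - c : ℕ) : ℤ) := by
  cases c with
  | zero => simp [DD]
  | succ c =>
    rw [DD, blocks_headI]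
    congr 1
    omega

lemma DD_second (M : ℕ) (kk mm : ℕ → ℕ) (c : ℕ) (hc1 : 1 ≤ c) (hc2 : c ≤ M + 1) :
    (DD M kk mm c).tail.headI = ((M + 2 - c : ℕ) : ℤ) := by
  cases c with
  | zero => omega
  | succ c =>
    rw [DD]
    cases hN : kk (M-c+1) - mm (M-c) with
    | zero =>
      simp only [List.range_zero, List.map_nil, List.flatten_nil, List.nil_append,
        List.tail_cons]
      rw [DD_headI]
      congr 1
      omega
    | succ N =>
      rw [List.range_succ_eq_map, List.map_cons, List.flatten_cons]
      have e1 : ((((M-c : ℕ) : ℤ) :: tw (((M-c : ℕ) : ℤ)+1) (hgt mm (M-c+1) (mm (M-c) + 1 + 0))) ++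
          (List.flatten (List.map ((fun j => ((M-c : ℕ) : ℤ) :: tw (((M-c : ℕ) : ℤ)+1)
            (hgt mm (M-c+1) (mm (M-c) + 1 + j))) ∘ Nat.succ) (List.range N)))) ++
          (((M-c : ℕ) : ℤ) :: DD M kk mm c)
          = ((M-c : ℕ) : ℤ) :: (tw (((M-c : ℕ) : ℤ)+1) (hgt mm (M-c+1) (mm (M-c) + 1 + 0)) ++
            ((List.flatten (List.map ((fun j => ((M-c : ℕ) : ℤ) :: tw (((M-c : ℕ) : ℤ)+1)
              (hgt mm (M-c+1) (mm (M-c) + 1 + j))) ∘ Nat.succ) (List.range N))) ++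
             (((M-c : ℕ) : ℤ) :: DD M kk mm c))) := by
        simp
      rw [List.map_map]
      rw [e1, List.tail_cons, headI_append_left (tw_ne_nil _ _), tw_headI]
      have : ((M-c : ℕ) : ℤ) + 1 = ((M + 2 - (c+1) : ℕ) : ℤ) := by omega
      rw [this]

lemma getLast?_cons_ne_nil {a : ℤ} {l : List ℤ} (h : l ≠ []) :
    (a :: l).getLast? = l.getLast? := by
  cases l with
  | nil => exact absurd rfl h
  | cons b t => exact List.getLast?_cons_cons

lemma DD_last (M : ℕ) (kk mm : ℕ → ℕ) (c : ℕ) :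
    (DD M kk mm c).getLast? = some ((M:ℤ)+1) := by
  induction c with
  | zero => rfl
  | succ c ih =>
    rw [DD, List.getLast?_append, getLast?_cons_ne_nil (DD_ne_nil M kk mm c), ih]
    rfl

lemma chain_blocks (nz : ℤ) (g : ℕ → ℕ) :
    ∀ (N : ℕ) (r : List ℤ), List.Chain' (fun a c : ℤ => |c - a| = 1) (nz :: r) →
    List.Chain' (fun a c : ℤ => |c - a| = 1)
      ((List.flatten ((List.range N).map (fun j => nz :: tw (nz+1) (g j)))) ++ (nz :: r)) := by
  intro N
  induction N with
  | zero => intro r h; simpa using h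
  | succ N ih =>
    intro r h
    rw [List.range_succ, List.map_append, List.flatten_append]
    have e1 : (List.flatten ((List.range N).map (fun j => nz :: tw (nz+1) (g j))) ++
        List.flatten (List.map (fun j => nz :: tw (nz+1) (g j)) [N])) ++ (nz :: r)
        = List.flatten ((List.range N).map (fun j => nz :: tw (nz+1) (g j))) ++
          (nz :: (tw (nz+1) (g N) ++ (nz :: r))) := by
      simp
    rw [e1]
    apply ih
    unfold List.Chain'
    rw [List.isChain_cons]
    constructor
    · intro y hy
      rw [List.head?_append_of_ne_nil _ (tw_ne_nil _ _), tw_head?] at hy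
      simp at hy
      subst hy
      rw [show nz+1-nz = (1:ℤ) by ring]
      norm_num
    · rw [List.isChain_append]
      refine ⟨tw_chain _ _, h, ?_⟩
      intro x hx y hy
      rw [tw_last] at hx
      simp at hx hy
      subst hx
      subst hy
      rw [show nz - (nz+1) = (-1:ℤ) by ring]
      norm_num

lemma DD_chain (M : ℕ) (kk mm : ℕ → ℕ) :
    ∀ c, c ≤ M + 1 → List.Chain' (fun a c : ℤ => |c - a| = 1) (DD M kk mm c) := by
  intro c
  induction c with
  | zero => intro _; simp [DD, List.Chain']
  | succ c ih =>
    intro hc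
    rw [DD]
    apply chain_blocks
    unfold List.Chain'
    rw [List.isChain_cons]
    refine ⟨?_, ih (by omega)⟩
    intro y hy
    rw [head?_eq_headI (DD_ne_nil M kk mm c), DD_headI] at hy
    simp at hy
    subst hy
    have h1 : ((M+1-c : ℕ) : ℤ) - ((M-c : ℕ) : ℤ) = 1 := by omega
    rw [h1]
    norm_num

lemma DD_nonneg (M : ℕ) (kk mm : ℕ → ℕ) :
    ∀ c, ∀ x ∈ DD M kk mm c, 0 ≤ x := by
  intro c
  induction c with
  | zero =>
    intro x hx
    simp [DD] at hx
    subst hx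
    positivity
  | succ c ih =>
    intro x hx
    rw [DD, List.mem_append] at hx
    rcases hx with hx | hx
    · rw [List.mem_flatten] at hx
      obtain ⟨lj, hlj, hxl⟩ := hx
      rw [List.mem_map] at hlj
      obtain ⟨j, hj, rfl⟩ := hlj
      rcases List.mem_cons.mp hxl with rfl | hxl
      · exact Int.natCast_nonneg _
      · have := tw_mem _ _ x hxl
        have h0 : (0:ℤ) ≤ ((M-c:ℕ):ℤ) := Int.natCast_nonneg _
        omega
    · rcases List.mem_cons.mp hx with rfl | hx
      · exact Int.natCast_nonneg _
      · exact ih x hx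

lemma DD_dropLast_le (M : ℕ) (kk mm : ℕ → ℕ) (h0 : ∀ q, M ≤ q → mm q = 0)
    (hkM : ∀ q, M+1 ≤ q → kk q = 0) :
    ∀ c, c ≤ M+1 → ∀ x ∈ (DD M kk mm c).dropLast, x ≤ (M:ℤ) := by
  intro c
  induction c with
  | zero =>
    intro _ x hx
    simp [DD] at hx
  | succ c ih =>
    intro hc x hx
    rw [DD, List.dropLast_append_of_ne_nil (by simp),
      List.dropLast_cons_of_ne_nil (DD_ne_nil M kk mm c), List.mem_append] at hx
    rcases hx with hx | hx
    · rw [List.mem_flatten] at hx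
      obtain ⟨lj, hlj, hxl⟩ := hx
      rw [List.mem_map] at hlj
      obtain ⟨j, hj, rfl⟩ := hlj
      rcases List.mem_cons.mp hxl with rfl | hxl
      · have : M - c ≤ M := by omega
        omega
      · have htm := tw_mem _ _ x hxl
        rw [List.mem_range] at hj
        have hNpos : 0 < kk (M-c+1) - mm (M-c) := by omega
        have hble : M - c + 1 ≤ M := by
          by_contra hgt2
          push_neg at hgt2
          have := hkM (M-c+1) (by omega)
          omega
        have hh := hgt_le M mm h0 (M-c+1) (mm (M-c) + 1 + j) hble (by omega)
        have hcast : ((M-c+1 : ℕ) : ℤ) = ((M-c : ℕ) : ℤ) + 1 := by omega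
        omega
    · rcases List.mem_cons.mp hx with rfl | hx
      · have : M - c ≤ M := by omega
        omega
      · exact ih (by omega) x hx

lemma DD_cnt2 (M : ℕ) (kk mm : ℕ → ℕ) (ν : ℤ) :
    ∀ c, c ≤ M + 1 → cnt2 (ν-1) ν (DD M kk mm c) =
      ∑ t ∈ Finset.range c,
        ((if ν = ((M+1-t : ℕ) : ℤ) then 1 else 0) +
         ∑ j ∈ Finset.range (kk (M+1-t) - mm (M-t)),
           (if ((M+1-t : ℕ) : ℤ) ≤ ν ∧
              ν ≤ ((M+1-t : ℕ) : ℤ) + (hgt mm (M+1-t) (mm (M-t) + 1 + j) : ℤ)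
            then 1 else 0)) := by
  intro c
  induction c with
  | zero => intro _; simp [DD, cnt2]
  | succ c ih =>
    intro hc
    rw [DD, blocks_cnt2, Finset.sum_range_succ, ← ih (by omega)]
    rw [cnt2_cons _ _ _ _ (DD_len M kk mm c), DD_headI]
    have hnat : M + 1 - c = M - c + 1 := by omega
    simp only [hnat]
    have hcast : ((M-c+1 : ℕ) : ℤ) = ((M-c : ℕ) : ℤ) + 1 := by omega
    simp only [hcast]
    split_ifs <;> omega

lemma DD_cnt3 (M : ℕ) (kk mm : ℕ → ℕ) (ν : ℤ) :
    ∀ c, c ≤ M + 1 → cnt3 (ν-1) ν (ν+1) (DD M kk mm c) =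
      ∑ t ∈ Finset.range c,
        ((if 1 ≤ t ∧ ν = ((M+1-t : ℕ) : ℤ) then 1 else 0) +
         ∑ j ∈ Finset.range (kk (M+1-t) - mm (M-t)),
           (if ((M+1-t : ℕ) : ℤ) ≤ ν ∧
              ν + 1 ≤ ((M+1-t : ℕ) : ℤ) + (hgt mm (M+1-t) (mm (M-t) + 1 + j) : ℤ)
            then 1 else 0)) := by
  intro c
  induction c with
  | zero => intro _; simp [DD, cnt3]
  | succ c ih =>
    intro hc
    have hb := blocks_cnt3 ν ((M-c : ℕ) : ℤ)
      (fun j => hgt mm (M-c+1) (mm (M-c) + 1 + j)) (kk (M-c+1) - mm (M-c))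
      (DD M kk mm c) (DD_len M kk mm c)
    rw [DD, hb, Finset.sum_range_succ, ← ih (by omega)]
    rcases Nat.eq_zero_or_pos c with rfl | hpos
    · have h2 : cnt3 (ν-1) ν (ν+1) (((M-0 : ℕ) : ℤ) :: DD M kk mm 0) = 0 := by
        simp [DD, cnt3]
      rw [h2]
      have hnat : M + 1 - 0 = M - 0 + 1 := by omega
      simp only [hnat]
      have hcast : ((M-0+1 : ℕ) : ℤ) = ((M-0 : ℕ) : ℤ) + 1 := by omega
      simp only [hcast, Finset.sum_range_zero]
      beta_reduce
      have h3 : cnt3 (ν-1) ν (ν+1) (DD M kk mm 0) = 0 := by simp [DD, cnt3]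
      rw [h3]
      split_ifs <;> omega
    · rw [cnt3_cons _ _ _ _ _ (DD_len2 M kk mm c hpos), DD_headI,
        DD_second M kk mm c hpos (by omega)]
      have hnat : M + 1 - c = M - c + 1 := by omega
      simp only [hnat]
      have hcast : ((M-c+1 : ℕ) : ℤ) = ((M-c : ℕ) : ℤ) + 1 := by omega
      have hcast2 : ((M+2-c : ℕ) : ℤ) = ((M-c : ℕ) : ℤ) + 2 := by omega
      simp only [hcast, hcast2]
      beta_reduce
      split_ifs <;> omega

lemma sum_ind : ∀ (N E : ℕ), (∑ j ∈ Finset.range N, if j < E then 1 else 0) = min N E := by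
  intro N E
  induction N with
  | zero => simp
  | succ N ih =>
    rw [Finset.sum_range_succ, ih]
    split_ifs <;> omega

lemma mono_aux (f : ℕ → ℕ) : ∀ B, (∀ i, i < B → f i ≤ f (i+1)) → f 0 ≤ f B := by
  intro B
  induction B with
  | zero => intro _; exact le_rfl
  | succ B ih =>
    intro h
    have := ih (fun i hi => h i (by omega))
    have := h B (by omega)
    omega

lemma tele (f : ℕ → ℕ) : ∀ B, (∀ i, i < B → f i ≤ f (i+1)) →
    ∑ i ∈ Finset.range B, (f (i+1) - f i) = f B - f 0 := by
  intro B
  induction B with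
  | zero => simp
  | succ B ih =>
    intro h
    rw [Finset.sum_range_succ, ih (fun i hi => h i (by omega))]
    have h1 := mono_aux f B (fun i hi => h i (by omega))
    have h2 := h B (by omega)
    omega

lemma hgt_cross (M : ℕ) (mm : ℕ → ℕ) (h0 : ∀ q, M ≤ q → mm q = 0) (b r ρ : ℕ)
    (hb : b ≤ r) (hρ : 1 ≤ ρ) :
    (r + 1 ≤ b + hgt mm b ρ) ↔ ρ ≤ mu mm b r := by
  rw [mu_ge_iff mm ρ b r hb]
  constructor
  · intro h q h1 h2
    have := (hgt_ge_iff M mm h0 b ρ (r+1-b) hρ).mp (by omega) (q - b) (by omega)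
    rw [show b + (q - b) = q by omega] at this
    exact this
  · intro h
    have h2 : (r+1-b) ≤ hgt mm b ρ := by
      rw [hgt_ge_iff M mm h0 b ρ _ hρ]
      intro d hd
      exact h (b+d) (by omega) (by omega)
    omega

lemma I1 (M : ℕ) (kk mm : ℕ → ℕ) (hm1 : ∀ q, mm q ≤ kk q) (hm2 : ∀ q, mm q ≤ kk (q+1))
    (hk0 : kk 0 = 0) (h0 : ∀ q, M ≤ q → mm q = 0) (v : ℕ) (hv1 : 1 ≤ v) (hvM : v ≤ M) :
    (∑ t ∈ Finset.range (M+1), ∑ j ∈ Finset.range (kk (t+1) - mm t),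
      (if ((t+1 : ℕ) : ℤ) ≤ (v:ℤ) ∧
          (v:ℤ) ≤ ((t+1 : ℕ) : ℤ) + (hgt mm (t+1) (mm t + 1 + j) : ℤ) then 1 else 0))
      = kk v := by
  obtain ⟨w, rfl⟩ : ∃ w, v = w + 1 := ⟨v - 1, by omega⟩
  have hm0 : mm 0 = 0 := by have := hm1 0; omega
  rw [← Finset.sum_subset (Finset.range_subset_range.mpr (show w+1 ≤ M+1 by omega))
    (by
      intro t _ ht
      rw [Finset.mem_range] at ht
      push_neg at ht
      apply Finset.sum_eq_zero
      intro j _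
      rw [if_neg]
      push_cast
      omega)]
  rw [Finset.sum_range_succ]
  have hlast : (∑ j ∈ Finset.range (kk (w+1) - mm w),
      (if ((w+1 : ℕ) : ℤ) ≤ ((w+1 : ℕ):ℤ) ∧
          ((w+1 : ℕ):ℤ) ≤ ((w+1 : ℕ) : ℤ) + (hgt mm (w+1) (mm w + 1 + j) : ℤ) then 1 else 0))
      = kk (w+1) - mm w := by
    have hone : ∀ j ∈ Finset.range (kk (w+1) - mm w),
        (if ((w+1 : ℕ) : ℤ) ≤ ((w+1 : ℕ):ℤ) ∧
          ((w+1 : ℕ):ℤ) ≤ ((w+1 : ℕ) : ℤ) + (hgt mm (w+1) (mm w + 1 + j) : ℤ) then 1 else 0)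
          = 1 := by
      intro j _
      rw [if_pos]
      constructor
      · omega
      · omega
    rw [Finset.sum_congr rfl hone]
    simp
  rw [hlast]
  have hterm : ∀ t ∈ Finset.range w, (∑ j ∈ Finset.range (kk (t+1) - mm t),
      (if ((t+1 : ℕ) : ℤ) ≤ ((w+1:ℕ):ℤ) ∧
          ((w+1:ℕ):ℤ) ≤ ((t+1 : ℕ) : ℤ) + (hgt mm (t+1) (mm t + 1 + j) : ℤ) then 1 else 0))
      = mu mm (t+1) w - mu mm t w := by
    intro t ht
    rw [Finset.mem_range] at ht
    have hstep : ∀ j ∈ Finset.range (kk (t+1) - mm t),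
        (if ((t+1 : ℕ) : ℤ) ≤ ((w+1:ℕ):ℤ) ∧
          ((w+1:ℕ):ℤ) ≤ ((t+1 : ℕ) : ℤ) + (hgt mm (t+1) (mm t + 1 + j) : ℤ) then 1 else 0)
          = if j < mu mm (t+1) w - mm t then 1 else 0 := by
      intro j _
      have hnn : (w + 1 ≤ t + 1 + hgt mm (t+1) (mm t + 1 + j)) ↔
          (j < mu mm (t+1) w - mm t) := by
        rw [hgt_cross M mm h0 (t+1) w (mm t + 1 + j) (by omega) (by omega)]
        have := mu_le mm (t+1) w (t+1) le_rfl (by omega)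
        omega
      have hzn : (((t+1 : ℕ) : ℤ) ≤ ((w+1:ℕ):ℤ) ∧
          ((w+1:ℕ):ℤ) ≤ ((t+1 : ℕ) : ℤ) + (hgt mm (t+1) (mm t + 1 + j) : ℤ)) ↔
          (w + 1 ≤ t + 1 + hgt mm (t+1) (mm t + 1 + j)) := by
        omega
      simp only [hzn, hnn]
    rw [Finset.sum_congr rfl hstep, sum_ind]
    have h1 : mu mm (t+1) w ≤ mm (t+1) := mu_le mm (t+1) w (t+1) le_rfl (by omega)
    have h2 : mm (t+1) ≤ kk (t+1) := hm1 (t+1)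
    have h3 : mu mm t w = min (mm t) (mu mm (t+1) w) := mu_cons mm t w (by omega)
    omega
  rw [Finset.sum_congr rfl hterm]
  have hmono : ∀ i, i < w → mu mm i w ≤ mu mm (i+1) w := by
    intro i hi
    have := mu_cons mm i w (by omega)
    omega
  have htel := tele (fun t => mu mm t w) w hmono
  rw [htel]
  have hf0 : mu mm 0 w ≤ mm 0 := mu_le mm 0 w 0 le_rfl (by omega)
  have hfw : mu mm w w = mm w := mu_self mm w
  have hlast2 : mm w ≤ kk (w+1) := hm2 w
  omega

lemma I2 (M : ℕ) (kk mm : ℕ → ℕ) (hm1 : ∀ q, mm q ≤ kk q) (hm2 : ∀ q, mm q ≤ kk (q+1))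
    (hk0 : kk 0 = 0) (h0 : ∀ q, M ≤ q → mm q = 0) (v : ℕ) (hvM : v ≤ M) :
    (∑ t ∈ Finset.range (M+1), ∑ j ∈ Finset.range (kk (t+1) - mm t),
      (if ((t+1 : ℕ) : ℤ) ≤ (v:ℤ) ∧
          (v:ℤ) + 1 ≤ ((t+1 : ℕ) : ℤ) + (hgt mm (t+1) (mm t + 1 + j) : ℤ) then 1 else 0))
      = mm v := by
  have hm0 : mm 0 = 0 := by have := hm1 0; omega
  rcases Nat.eq_zero_or_pos v with rfl | hv1
  · rw [Finset.sum_eq_zero]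
    · omega
    · intro t _
      apply Finset.sum_eq_zero
      intro j _
      rw [if_neg]
      push_cast
      omega
  rw [← Finset.sum_subset (Finset.range_subset_range.mpr (show v ≤ M+1 by omega))
    (by
      intro t _ ht
      rw [Finset.mem_range] at ht
      push_neg at ht
      apply Finset.sum_eq_zero
      intro j _
      rw [if_neg]
      push_cast
      omega)]
  have hterm : ∀ t ∈ Finset.range v, (∑ j ∈ Finset.range (kk (t+1) - mm t),
      (if ((t+1 : ℕ) : ℤ) ≤ ((v:ℕ):ℤ) ∧
          ((v:ℕ):ℤ) + 1 ≤ ((t+1 : ℕ) : ℤ) + (hgt mm (t+1) (mm t + 1 + j) : ℤ) then 1 else 0))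
      = mu mm (t+1) v - mu mm t v := by
    intro t ht
    rw [Finset.mem_range] at ht
    have hstep : ∀ j ∈ Finset.range (kk (t+1) - mm t),
        (if ((t+1 : ℕ) : ℤ) ≤ ((v:ℕ):ℤ) ∧
          ((v:ℕ):ℤ) + 1 ≤ ((t+1 : ℕ) : ℤ) + (hgt mm (t+1) (mm t + 1 + j) : ℤ) then 1 else 0)
          = if j < mu mm (t+1) v - mm t then 1 else 0 := by
      intro j _
      have hnn : (v + 1 ≤ t + 1 + hgt mm (t+1) (mm t + 1 + j)) ↔
          (j < mu mm (t+1) v - mm t) := by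
        rw [hgt_cross M mm h0 (t+1) v (mm t + 1 + j) (by omega) (by omega)]
        have := mu_le mm (t+1) v (t+1) le_rfl (by omega)
        omega
      have hzn : (((t+1 : ℕ) : ℤ) ≤ ((v:ℕ):ℤ) ∧
          ((v:ℕ):ℤ) + 1 ≤ ((t+1 : ℕ) : ℤ) + (hgt mm (t+1) (mm t + 1 + j) : ℤ)) ↔
          (v + 1 ≤ t + 1 + hgt mm (t+1) (mm t + 1 + j)) := by
        omega
      simp only [hzn, hnn]
    rw [Finset.sum_congr rfl hstep, sum_ind]
    have h1 : mu mm (t+1) v ≤ mm (t+1) := mu_le mm (t+1) v (t+1) le_rfl (by omega)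
    have h2 : mm (t+1) ≤ kk (t+1) := hm1 (t+1)
    have h3 : mu mm t v = min (mm t) (mu mm (t+1) v) := mu_cons mm t v (by omega)
    omega
  rw [Finset.sum_congr rfl hterm]
  have hmono : ∀ i, i < v → mu mm i v ≤ mu mm (i+1) v := by
    intro i hi
    have := mu_cons mm i v (by omega)
    omega
  have htel := tele (fun t => mu mm t v) v hmono
  rw [htel]
  have hf0 : mu mm 0 v ≤ mm 0 := mu_le mm 0 v 0 le_rfl (by omega)
  have hfv : mu mm v v = mm v := mu_self mm v
  omega

lemma getD_last {l : List ℤ} {x : ℤ} (h : l.getLast? = some x) :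
    l.getD (l.length - 1) 0 = x := by
  rw [List.getD_eq_getElem?_getD, ← List.getLast?_eq_getElem?, h]
  rfl

lemma refl_sum (M : ℕ) (F : ℕ → ℕ) :
    ∑ t ∈ Finset.range (M+1), F (M+1-t) = ∑ t ∈ Finset.range (M+1), F (t+1) := by
  rw [← Finset.sum_range_reflect (fun t => F (t+1)) (M+1)]
  apply Finset.sum_congr rfl
  intro t ht
  rw [Finset.mem_range] at ht
  congr 1
  omega

lemma final_scat (M : ℕ) (kk mm : ℕ → ℕ) (h0 : ∀ q, M ≤ q → mm q = 0)
    (hkM : ∀ q, M+1 ≤ q → kk q = 0) :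
    IsTransScat M ((-1 : ℤ) :: DD M kk mm (M+1)) := by
  set p := (-1 : ℤ) :: DD M kk mm (M+1) with hp
  have hlen : p.length = (DD M kk mm (M+1)).length + 1 := by simp [hp]
  have hDlen := DD_len M kk mm (M+1)
  have hDlen2 := DD_len2 M kk mm (M+1) (by omega)
  refine ⟨rfl, ?_, ?_, ?_⟩
  · have h1 : p.length - 1 = ((DD M kk mm (M+1)).length - 1) + 1 := by omega
    rw [h1]
    show ent (DD M kk mm (M+1)) ((DD M kk mm (M+1)).length - 1) = (M:ℤ) + 1
    exact getD_last (DD_last M kk mm (M+1))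
  · intro i h1 h2
    have hi : i - 1 + 1 = i := by omega
    have he : ent p i = ent (DD M kk mm (M+1)) (i-1) := by
      rw [← hi]
      rfl
    rw [he]
    have hidx : i - 1 < (DD M kk mm (M+1)).length - 1 := by omega
    have hidx2 : i - 1 < (DD M kk mm (M+1)).length := by omega
    show 0 ≤ (DD M kk mm (M+1)).getD (i-1) 0 ∧ (DD M kk mm (M+1)).getD (i-1) 0 ≤ (M:ℤ)
    rw [List.getD_eq_getElem _ _ hidx2]
    constructor
    · exact DD_nonneg M kk mm (M+1) _ (List.getElem_mem hidx2)
    · have hdl : i - 1 < (DD M kk mm (M+1)).dropLast.length := by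
        rw [List.length_dropLast]
        omega
      have hmem := List.getElem_mem hdl
      rw [List.getElem_dropLast] at hmem
      exact DD_dropLast_le M kk mm h0 hkM (M+1) le_rfl _ hmem
  · intro i hi
    have hch : List.Chain' (fun a c : ℤ => |c - a| = 1) p := by
      rw [hp]
      unfold List.Chain'
      rw [List.isChain_cons]
      refine ⟨?_, DD_chain M kk mm (M+1) le_rfl⟩
      intro y hy
      rw [head?_eq_headI (DD_ne_nil _ _ _ _), DD_headI] at hy
      simp only [Option.mem_def, Option.some.injEq] at hy
      subst hy
      rw [show M+1-(M+1) = 0 by omega]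
      norm_num
    unfold List.Chain' at hch
    rw [List.isChain_iff_getElem] at hch
    have hstep := hch i (by omega)
    show |ent p (i+1) - ent p i| = 1
    unfold ent
    rw [List.getD_eq_getElem _ _ (show i < p.length by omega),
      List.getD_eq_getElem _ _ (show i+1 < p.length by omega)]
    simpa using hstep

lemma final_cnt2 (M : ℕ) (kk mm : ℕ → ℕ) (hm1 : ∀ q, mm q ≤ kk q)
    (hm2 : ∀ q, mm q ≤ kk (q+1)) (hk0 : kk 0 = 0) (h0 : ∀ q, M ≤ q → mm q = 0)
    (v : ℕ) (hv : v ≤ M) :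
    cnt2 ((v:ℤ)-1) (v:ℤ) ((-1 : ℤ) :: DD M kk mm (M+1)) = kk v + 1 := by
  have hDlen := DD_len M kk mm (M+1)
  rw [cnt2_cons _ _ _ _ hDlen, DD_headI, DD_cnt2 M kk mm (v:ℤ) (M+1) le_rfl,
    Finset.sum_add_distrib]
  set FF : ℕ → ℕ := fun b => ∑ j ∈ Finset.range (kk b - mm (b-1)),
    (if ((b : ℕ) : ℤ) ≤ (v:ℤ) ∧
        (v:ℤ) ≤ ((b : ℕ) : ℤ) + (hgt mm b (mm (b-1) + 1 + j) : ℤ) then 1 else 0) with hFF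
  have hA : ∀ t ∈ Finset.range (M+1),
      (∑ j ∈ Finset.range (kk (M+1-t) - mm (M-t)),
        (if ((M+1-t : ℕ) : ℤ) ≤ (v:ℤ) ∧
          (v:ℤ) ≤ ((M+1-t : ℕ) : ℤ) + (hgt mm (M+1-t) (mm (M-t) + 1 + j) : ℤ)
         then 1 else 0)) = FF (M+1-t) := by
    intro t ht
    rw [Finset.mem_range] at ht
    rw [hFF]
    simp only [show M - t = M+1-t-1 by omega]
  rw [Finset.sum_congr rfl hA]
  have hr := refl_sum M FF
  rw [hr]
  have hB : ∀ t ∈ Finset.range (M+1), FF (t+1) =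
      ∑ j ∈ Finset.range (kk (t+1) - mm t),
      (if ((t+1 : ℕ) : ℤ) ≤ (v:ℤ) ∧
          (v:ℤ) ≤ ((t+1 : ℕ) : ℤ) + (hgt mm (t+1) (mm t + 1 + j) : ℤ) then 1 else 0) := by
    intro t _
    rw [hFF]
    simp only [Nat.add_sub_cancel]
  rw [Finset.sum_congr rfl hB]
  rcases Nat.eq_zero_or_pos v with rfl | hv1
  · have hz : (∑ t ∈ Finset.range (M+1), ∑ j ∈ Finset.range (kk (t+1) - mm t),
        (if ((t+1 : ℕ) : ℤ) ≤ ((0:ℕ):ℤ) ∧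
          ((0:ℕ):ℤ) ≤ ((t+1 : ℕ) : ℤ) + (hgt mm (t+1) (mm t + 1 + j) : ℤ) then 1 else 0)) = 0 := by
      apply Finset.sum_eq_zero
      intro t _
      apply Finset.sum_eq_zero
      intro j _
      rw [if_neg]
      push_cast
      omega
    rw [hz]
    have hjz : (∑ t ∈ Finset.range (M+1), if ((0:ℕ):ℤ) = ((M+1-t : ℕ) : ℤ) then 1 else 0) = 0 := by
      apply Finset.sum_eq_zero
      intro t ht
      rw [Finset.mem_range] at ht
      rw [if_neg (by omega)]
    rw [hjz]
    rw [if_pos (by constructor <;> omega)]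
    omega
  · rw [I1 M kk mm hm1 hm2 hk0 h0 v hv1 hv]
    have hjs : (∑ t ∈ Finset.range (M+1), if ((v:ℕ):ℤ) = ((M+1-t : ℕ) : ℤ) then 1 else 0) = 1 := by
      have hcg : ∀ t ∈ Finset.range (M+1),
          (if ((v:ℕ):ℤ) = ((M+1-t : ℕ) : ℤ) then 1 else 0) = if t = M+1-v then (1:ℕ) else 0 := by
        intro t ht
        rw [Finset.mem_range] at ht
        have : (((v:ℕ):ℤ) = ((M+1-t : ℕ) : ℤ)) ↔ (t = M+1-v) := by omega
        simp only [this]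
      rw [Finset.sum_congr rfl hcg, Finset.sum_ite_eq' (Finset.range (M+1)) (M+1-v) (fun _ => 1),
        if_pos (Finset.mem_range.mpr (by omega))]
    rw [hjs]
    rw [if_neg (by omega)]
    omega

lemma final_cnt3 (M : ℕ) (kk mm : ℕ → ℕ) (hm1 : ∀ q, mm q ≤ kk q)
    (hm2 : ∀ q, mm q ≤ kk (q+1)) (hk0 : kk 0 = 0) (h0 : ∀ q, M ≤ q → mm q = 0)
    (hM : 1 ≤ M) (v : ℕ) (hv : v ≤ M) :
    cnt3 ((v:ℤ)-1) (v:ℤ) ((v:ℤ)+1) ((-1 : ℤ) :: DD M kk mm (M+1)) = mm v + 1 := by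
  have hm0 : mm 0 = 0 := by have := hm1 0; omega
  have hDlen2 := DD_len2 M kk mm (M+1) (by omega)
  rw [cnt3_cons _ _ _ _ _ hDlen2, DD_headI, DD_second M kk mm (M+1) (by omega) le_rfl,
    DD_cnt3 M kk mm (v:ℤ) (M+1) le_rfl, Finset.sum_add_distrib]
  simp only [show M+1-(M+1) = 0 by omega, show M+2-(M+1) = 1 by omega]
  set FF : ℕ → ℕ := fun b => ∑ j ∈ Finset.range (kk b - mm (b-1)),
    (if ((b : ℕ) : ℤ) ≤ (v:ℤ) ∧
        (v:ℤ) + 1 ≤ ((b : ℕ) : ℤ) + (hgt mm b (mm (b-1) + 1 + j) : ℤ) then 1 else 0) with hFF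
  have hA : ∀ t ∈ Finset.range (M+1),
      (∑ j ∈ Finset.range (kk (M+1-t) - mm (M-t)),
        (if ((M+1-t : ℕ) : ℤ) ≤ (v:ℤ) ∧
          (v:ℤ) + 1 ≤ ((M+1-t : ℕ) : ℤ) + (hgt mm (M+1-t) (mm (M-t) + 1 + j) : ℤ)
         then 1 else 0)) = FF (M+1-t) := by
    intro t ht
    rw [Finset.mem_range] at ht
    rw [hFF]
    simp only [show M - t = M+1-t-1 by omega]
  rw [Finset.sum_congr rfl hA]
  have hr := refl_sum M FF
  rw [hr]
  have hB : ∀ t ∈ Finset.range (M+1), FF (t+1) =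
      ∑ j ∈ Finset.range (kk (t+1) - mm t),
      (if ((t+1 : ℕ) : ℤ) ≤ (v:ℤ) ∧
          (v:ℤ) + 1 ≤ ((t+1 : ℕ) : ℤ) + (hgt mm (t+1) (mm t + 1 + j) : ℤ) then 1 else 0) := by
    intro t _
    rw [hFF]
    simp only [Nat.add_sub_cancel]
  rw [Finset.sum_congr rfl hB, I2 M kk mm hm1 hm2 hk0 h0 v hv]
  rcases Nat.eq_zero_or_pos v with rfl | hv1
  · have hjz : (∑ t ∈ Finset.range (M+1),
        if 1 ≤ t ∧ ((0:ℕ):ℤ) = ((M+1-t : ℕ) : ℤ) then 1 else 0) = 0 := by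
      apply Finset.sum_eq_zero
      intro t ht
      rw [Finset.mem_range] at ht
      rw [if_neg (by omega)]
    rw [hjz]
    rw [if_pos (by refine ⟨by omega, by omega, by omega⟩)]
    omega
  · have hjs : (∑ t ∈ Finset.range (M+1),
        if 1 ≤ t ∧ ((v:ℕ):ℤ) = ((M+1-t : ℕ) : ℤ) then 1 else 0) = 1 := by
      have hcg : ∀ t ∈ Finset.range (M+1),
          (if 1 ≤ t ∧ ((v:ℕ):ℤ) = ((M+1-t : ℕ) : ℤ) then 1 else 0)
            = if t = M+1-v then (1:ℕ) else 0 := by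
        intro t ht
        rw [Finset.mem_range] at ht
        have : (1 ≤ t ∧ ((v:ℕ):ℤ) = ((M+1-t : ℕ) : ℤ)) ↔ (t = M+1-v) := by omega
        simp only [this]
      rw [Finset.sum_congr rfl hcg, Finset.sum_ite_eq' (Finset.range (M+1)) (M+1-v) (fun _ => 1),
        if_pos (Finset.mem_range.mpr (by omega))]
    rw [hjs]
    rw [if_neg (by omega)]
    omega

/-- Proposition 2 of the paper: given `k` with `k_0 = 0` and
`0 ≤ m ≤ min{k, k̃}`, there is a transmission scattering sequence `p` with
`κ'(p) = k` and `β'(p) = m`. -/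
theorem trans_realization (M : ℕ) (hM : 1 ≤ M)
    (k : Fin (M + 1) → ℕ) (hk0 : k 0 = 0)
    (m : Fin (M + 1) → ℕ) (hm : ∀ n, m n ≤ min (k n) (ktilde M k n)) :
    ∃ p : List ℤ, IsTransScat M p ∧ kappaT M p = k ∧ betaT M p = m := by
  classical
  set kk : ℕ → ℕ := fun q => if h : q < M+1 then k ⟨q,h⟩ else 0 with hkk
  set mm2 : ℕ → ℕ := fun q => if h : q < M+1 then m ⟨q,h⟩ else 0 with hmm2
  have hktilde : ∀ (q : ℕ) (h : q < M+1), ktilde M k ⟨q,h⟩ = kk (q+1) := by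
    intro q h
    rw [ktilde, hkk]
  have hm1 : ∀ q, mm2 q ≤ kk q := by
    intro q
    rw [hkk, hmm2]
    by_cases h : q < M+1
    · simp only [dif_pos h]
      exact le_trans (hm ⟨q,h⟩) (min_le_left _ _)
    · simp only [dif_neg h]
      exact le_rfl
  have hm2' : ∀ q, mm2 q ≤ kk (q+1) := by
    intro q
    by_cases h : q < M+1
    · have h1 := le_trans (hm ⟨q,h⟩) (min_le_right _ _)
      rw [hktilde q h] at h1
      rw [hmm2]
      simpa only [dif_pos h] using h1
    · rw [hmm2]
      simp only [dif_neg h]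
      exact Nat.zero_le _
  have hk0' : kk 0 = 0 := by
    rw [hkk]
    simp only [dif_pos (show 0 < M+1 by omega)]
    have e0 : (⟨0, show 0 < M+1 by omega⟩ : Fin (M+1)) = 0 := rfl
    rw [e0, hk0]
  have h0' : ∀ q, M ≤ q → mm2 q = 0 := by
    intro q hq
    by_cases h : q < M+1
    · have hqM : q = M := by omega
      have h1 := le_trans (hm ⟨q,h⟩) (min_le_right _ _)
      rw [hktilde q h, hkk] at h1
      simp only [dif_neg (show ¬ (q+1 < M+1) by omega)] at h1
      rw [hmm2]
      simp only [dif_pos h]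
      omega
    · rw [hmm2]
      simp only [dif_neg h]
  have hkM' : ∀ q, M+1 ≤ q → kk q = 0 := by
    intro q hq
    rw [hkk]
    simp only [dif_neg (show ¬ (q < M+1) by omega)]
  have hTS := final_scat M kk mm2 h0' hkM'
  refine ⟨(-1 : ℤ) :: DD M kk mm2 (M+1), hTS, ?_, ?_⟩
  · funext n
    have hcq := (counts_eq M _ hTS (n : ℕ) (by omega)).1
    have hc2 := final_cnt2 M kk mm2 hm1 hm2' hk0' h0' (n : ℕ) (by omega)
    have hbridge := cnt2_eq_sum (((n:ℕ):ℤ)-1) ((n:ℕ):ℤ) ((-1:ℤ) :: DD M kk mm2 (M+1))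
    rw [← Finset.card_filter] at hbridge
    have hkk_n : kk (n : ℕ) = k n := by
      rw [hkk]
      simp only [dif_pos n.isLt]
    show {ac ∈ excSet ((-1:ℤ) :: DD M kk mm2 (M+1)) ((n:ℕ):ℤ) |
        ac.2 ≠ ((-1:ℤ) :: DD M kk mm2 (M+1)).length - 1}.ncard = k n
    omega
  · funext n
    have hcq := (counts_eq M _ hTS (n : ℕ) (by omega)).2
    have hc3 := final_cnt3 M kk mm2 hm1 hm2' hk0' h0' hM (n : ℕ) (by omega)
    have hbridge := cnt3_eq_sum (((n:ℕ):ℤ)-1) ((n:ℕ):ℤ) (((n:ℕ):ℤ)+1)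
      ((-1:ℤ) :: DD M kk mm2 (M+1))
    rw [← Finset.card_filter] at hbridge
    have hmm_n : mm2 (n : ℕ) = m n := by
      rw [hmm2]
      simp only [dif_pos n.isLt]
    show {ac ∈ excSet ((-1:ℤ) :: DD M kk mm2 (M+1)) ((n:ℕ):ℤ) |
        ac.2 ≠ ((-1:ℤ) :: DD M kk mm2 (M+1)).length - 1 ∧
        ∃ i, ac.1 ≤ i ∧ i ≤ ac.2 ∧ ((n:ℕ):ℤ) + 1 ≤ ent ((-1:ℤ) :: DD M kk mm2 (M+1)) i}.ncard
      = m n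
    omega
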